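/- The Lebesgue measure of the set of jump-time vectors for d non-intersecting up/right paths from starting points (0,i) to endpoints (t, M−d+i), 1 ≤ i ≤ d, equals t^{(M−d)d} · ∏_{i=0}^{d−1} i! / (M−d+i)!. -/

import Mathlib

open MeasureTheory

/-- The position at time `s` of the `i`-th up/right path (started at height `i+1`)
with jump times `τ i : Fin c → ℝ`: the starting height plus the number of jumps
made up to time `s`. -/
noncomputable def pathPos {d c : ℕ} (τ : Fin d → Fin c → ℝ) (i : Fin d) (s : ℝ) : ℕ :=
  (i : ℕ) + 1 + Nat.card {j : Fin c // τ i j ≤ s}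

/-- The set of jump-time vectors of `d`-tuples of non-intersecting up/right paths,
where path `i` starts at height `i+1` at time `0`, makes `M−d` jumps at strictly
increasing times in `(0,t)` (thus ending at height `M−d+i+1` at time `t`), and the
paths are strictly ordered at all intermediate times. -/
def nonintersectingJumpTimes (d M : ℕ) (t : ℝ) :
    Set (Fin d → Fin (M - d) → ℝ) :=
  {τ | (∀ i, StrictMono (τ i)) ∧ (∀ i j, τ i j ∈ Set.Ioo 0 t) ∧
    ∀ i i' : Fin d, i < i' → ∀ s ∈ Set.Ioo 0 t, pathPos τ i s < pathPos τ i' s}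

open Finset Function Polynomial

namespace NDP


variable {d c : ℕ}

/-- cells -/
abbrev Cell (d c : ℕ) := Fin d × Fin c

/-- `cle a b` : the jump at cell `a` must happen before the jump at cell `b`. -/
def cle (a b : Cell d c) : Prop := b.1 ≤ a.1 ∧ a.2 ≤ b.2

instance (a b : Cell d c) : Decidable (cle a b) := by unfold cle; infer_instance

/-- A good enumeration of `S`: injective, valued in `S`, respecting `cle`. -/
def Good (S : Finset (Cell d c)) {m : ℕ} (u : Fin m → Cell d c) : Prop :=
  (∀ p, u p ∈ S) ∧ Function.Injective u ∧
    ∀ p q, cle (u p) (u q) → u p ≠ u q → p < q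

instance (S : Finset (Cell d c)) (m : ℕ) : DecidablePred (Good S (m := m)) := by
  intro u; unfold Good; infer_instance

/-- number of good enumerations with `m` steps -/
def G (d c m : ℕ) (S : Finset (Cell d c)) : ℕ :=
  (Finset.univ.filter (fun u : Fin m → Cell d c => Good S u)).card

/-- maximal elements of `S` -/
def Mx (S : Finset (Cell d c)) : Finset (Cell d c) :=
  S.filter (fun a => ∀ b ∈ S, cle a b → b = a)

lemma good_last_mem_max {S : Finset (Cell d c)} {m : ℕ} (hS : S.card = m + 1)
    {u : Fin (m + 1) → Cell d c} (hu : Good S u) : u (Fin.last m) ∈ Mx S := by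
  classical
  have himg : Finset.image u Finset.univ = S := by
    apply Finset.eq_of_subset_of_card_le
    · intro b hb
      obtain ⟨p, _, rfl⟩ := Finset.mem_image.1 hb
      exact hu.1 p
    · rw [hS, Finset.card_image_of_injective _ hu.2.1, Finset.card_univ, Fintype.card_fin]
  rw [Mx, Finset.mem_filter]
  refine ⟨hu.1 _, fun b hb hle => ?_⟩
  by_contra hne
  rw [← himg, Finset.mem_image] at hb
  obtain ⟨p, _, rfl⟩ := hb
  have := hu.2.2 _ _ hle (fun h => hne h.symm)
  exact absurd (Fin.le_last p) (not_le.2 this)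

lemma good_init {S : Finset (Cell d c)} {m : ℕ}
    {u : Fin (m + 1) → Cell d c} (hu : Good S u) :
    Good (S.erase (u (Fin.last m))) (Fin.init u) := by
  classical
  refine ⟨fun p => ?_, fun p q h => ?_, fun p q hle hne => ?_⟩
  · rw [Finset.mem_erase]
    refine ⟨fun h => ?_, hu.1 _⟩
    · exact absurd (hu.2.1 h) (Fin.ne_last_of_lt (Fin.castSucc_lt_last p))
  · exact Fin.castSucc_injective _ (hu.2.1 h)
  · have := hu.2.2 _ _ hle hne
    exact Fin.castSucc_lt_castSucc_iff.1 this

lemma good_snoc {S : Finset (Cell d c)} {m : ℕ} {a : Cell d c} (ha : a ∈ Mx S)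
    {v : Fin m → Cell d c} (hv : Good (S.erase a) v) :
    Good S (Fin.snoc v a) := by
  classical
  rw [Mx, Finset.mem_filter] at ha
  refine ⟨fun p => ?_, ?_, ?_⟩
  · refine Fin.lastCases ?_ (fun p' => ?_) p
    · rw [Fin.snoc_last]; exact ha.1
    · rw [Fin.snoc_castSucc]; exact Finset.mem_of_mem_erase (hv.1 p')
  · intro p q h
    rcases Fin.eq_castSucc_or_eq_last p with ⟨p', rfl⟩ | rfl <;>
      rcases Fin.eq_castSucc_or_eq_last q with ⟨q', rfl⟩ | rfl <;>
      simp only [Fin.snoc_last, Fin.snoc_castSucc] at h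
    · exact congrArg Fin.castSucc (hv.2.1 h)
    · exact absurd h (Finset.ne_of_mem_erase (hv.1 p'))
    · exact absurd h.symm (Finset.ne_of_mem_erase (hv.1 q'))
    · rfl
  · intro p q hle hne
    rcases Fin.eq_castSucc_or_eq_last p with ⟨p', rfl⟩ | rfl <;>
      rcases Fin.eq_castSucc_or_eq_last q with ⟨q', rfl⟩ | rfl <;>
      simp only [Fin.snoc_last, Fin.snoc_castSucc] at hle hne
    · exact Fin.castSucc_lt_castSucc_iff.2 (hv.2.2 _ _ hle hne)
    · exact Fin.castSucc_lt_last p'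
    · exact absurd (ha.2 _ (Finset.mem_of_mem_erase (hv.1 q')) hle)
        (Finset.ne_of_mem_erase (hv.1 q'))
    · exact absurd rfl hne

lemma G_succ (S : Finset (Cell d c)) (m : ℕ) (hS : S.card = m + 1) :
    G d c (m + 1) S = ∑ a ∈ Mx S, G d c m (S.erase a) := by
  classical
  rw [G]
  rw [Finset.card_eq_sum_card_fiberwise
    (f := fun u : Fin (m+1) → Cell d c => u (Fin.last m)) (t := Mx S)
    (fun u hu => good_last_mem_max hS (Finset.mem_filter.1 hu).2)]
  refine Finset.sum_congr rfl (fun a ha => ?_)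
  rw [G]
  refine Finset.card_bij' (fun u _ => Fin.init u) (fun v _ => Fin.snoc v a) ?_ ?_ ?_ ?_
  · intro u hu
    simp only [Finset.mem_filter, Finset.mem_univ, true_and] at hu ⊢
    obtain ⟨hg, hlast⟩ := hu
    have := good_init hg
    rwa [hlast] at this
  · intro v hv
    simp only [Finset.mem_filter, Finset.mem_univ, true_and] at hv ⊢
    exact ⟨good_snoc ha hv, by simp⟩
  · intro u hu
    simp only [Finset.mem_filter, Finset.mem_univ, true_and] at hu
    have := Fin.snoc_init_self u
    rw [hu.2] at this
    exact this
  · intro v hv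
    simp

/-- removable corner -/
def Rem (l : Fin d → ℕ) (i : Fin d) : Prop := 0 < l i ∧ ∀ j, j < i → l j < l i

instance (l : Fin d → ℕ) : DecidablePred (Rem l) := by intro i; unfold Rem; infer_instance

/-- diagram of a (monotone) shape -/
def diag (c : ℕ) (l : Fin d → ℕ) : Finset (Cell d c) :=
  Finset.univ.filter (fun a => (a.2 : ℕ) < l a.1)

lemma card_filter_val_lt {n : ℕ} (hn : n ≤ c) :
    (Finset.univ.filter (fun k : Fin c => (k : ℕ) < n)).card = n := by
  rw [← Finset.card_range n]
  refine Finset.card_bij' (fun a _ => (a : ℕ)) (fun b hb => ⟨b, lt_of_lt_of_le (Finset.mem_range.1 hb) hn⟩) ?_ ?_ ?_ ?_ <;>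
    simp +contextual [Finset.mem_filter, Finset.mem_range]

lemma card_diag (l : Fin d → ℕ) (hl : ∀ i, l i ≤ c) : (diag c l).card = ∑ i, l i := by
  classical
  rw [diag, Finset.card_eq_sum_card_fiberwise (f := Prod.fst) (t := Finset.univ)
    (fun a _ => Finset.mem_univ _)]
  refine Finset.sum_congr rfl (fun i _ => ?_)
  rw [← card_filter_val_lt (hl i)]
  refine Finset.card_bij' (fun a _ => a.2) (fun k hk => (i, k)) ?_ ?_ ?_ ?_ <;>
    simp +contextual [Finset.mem_filter]
  exact fun a b h ha => ha ▸ h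

lemma mem_mx_diag {l : Fin d → ℕ} (hl : Monotone l) (hlc : ∀ i, l i ≤ c) {a : Cell d c} :
    a ∈ Mx (diag c l) ↔ Rem l a.1 ∧ (a.2 : ℕ) = l a.1 - 1 := by
  obtain ⟨i, k⟩ := a
  simp only [Mx, diag, Finset.mem_filter, Finset.mem_univ, true_and, Rem]
  constructor
  · rintro ⟨hk, hmax⟩
    have hval : (k : ℕ) = l i - 1 := by
      by_contra hne
      have h1 : (k : ℕ) + 1 < l i := by omega
      have hb := hmax (i, ⟨(k : ℕ) + 1, lt_of_lt_of_le h1 (hlc i)⟩)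
        (by simpa using h1) ⟨le_refl _, by simp [Fin.le_iff_val_le_val]⟩
      simp only [Prod.mk.injEq, Fin.ext_iff] at hb
      omega
    refine ⟨⟨by omega, fun j hj => ?_⟩, hval⟩
    rcases lt_or_eq_of_le (hl hj.le) with h | h
    · exact h
    · exfalso
      have hb := hmax (j, k) (by simp; omega) ⟨hj.le, le_refl _⟩
      simp only [Prod.mk.injEq] at hb
      exact absurd (congrArg Fin.val hb.1) (by omega)
  · rintro ⟨⟨hpos, hstrict⟩, hval⟩
    refine ⟨by omega, fun b hb hle => ?_⟩
    obtain ⟨j, k'⟩ := b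
    simp only at hb
    obtain ⟨h1, h2⟩ := hle
    simp only at h1 h2
    have hj : j = i := by
      by_contra hne
      have hji : j < i := lt_of_le_of_ne h1 hne
      have := hstrict j hji
      have := Fin.le_iff_val_le_val.1 h2
      omega
    subst hj
    have : (k' : ℕ) = (k : ℕ) := by
      have := Fin.le_iff_val_le_val.1 h2
      omega
    simp [Prod.ext_iff, Fin.ext_iff, this]

lemma erase_diag {l : Fin d → ℕ} {i₀ : Fin d} (hr : Rem l i₀)
    {k₀ : Fin c} (hk : (k₀ : ℕ) = l i₀ - 1) :
    (diag c l).erase (i₀, k₀) = diag c (update l i₀ (l i₀ - 1)) := by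
  ext ⟨i, k⟩
  simp only [diag, Finset.mem_erase, Finset.mem_filter, Finset.mem_univ, true_and]
  rcases eq_or_ne i i₀ with rfl | hne
  · rw [update_self]
    have hk0 : ((i, k) ≠ (i, k₀)) ↔ (k : ℕ) ≠ (k₀ : ℕ) := by
      simp [Prod.ext_iff, Fin.ext_iff]
    rw [hk0]
    have := hr.1
    omega
  · rw [update_of_ne hne]
    have : (i, k) ≠ (i₀, k₀) := by simp [Prod.ext_iff, hne]
    tauto

lemma monotone_update {l : Fin d → ℕ} (hl : Monotone l) {i₀ : Fin d} (hr : Rem l i₀) :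
    Monotone (update l i₀ (l i₀ - 1)) := by
  intro a b hab
  rcases eq_or_ne b i₀ with rfl | hb
  · rcases eq_or_ne a b with rfl | ha
    · simp
    · rw [update_self, update_of_ne ha]
      have := hr.2 a (lt_of_le_of_ne hab ha)
      omega
  · rw [update_of_ne hb]
    rcases eq_or_ne a i₀ with rfl | ha
    · rw [update_self]
      exact le_trans (Nat.pred_le _) (hl hab)
    · rw [update_of_ne ha]; exact hl hab



section PXC
variable {ι : Type*}

lemma pXC_monic (s : Finset ι) (f : ι → ℚ) : (∏ i ∈ s, (X - C (f i))).Monic :=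
  monic_prod_of_monic _ _ (fun _ _ => monic_X_sub_C _)

lemma pXC_natDegree (s : Finset ι) (f : ι → ℚ) :
    (∏ i ∈ s, (X - C (f i))).natDegree = s.card := by
  rw [natDegree_prod _ _ (fun i _ => X_sub_C_ne_zero _)]
  simp

lemma pXC_degree (s : Finset ι) (f : ι → ℚ) :
    (∏ i ∈ s, (X - C (f i))).degree = (s.card : WithBot ℕ) := by
  rw [degree_eq_natDegree (pXC_monic s f).ne_zero, pXC_natDegree]

lemma pXC_coeff_card (s : Finset ι) (f : ι → ℚ) :
    (∏ i ∈ s, (X - C (f i))).coeff s.card = 1 := by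
  have := (pXC_monic s f).coeff_natDegree
  rwa [pXC_natDegree] at this

lemma pXC_coeff_pred (s : Finset ι) (f : ι → ℚ) (hs : 0 < s.card) :
    (∏ i ∈ s, (X - C (f i))).coeff (s.card - 1) = -∑ i ∈ s, f i := by
  have h := prod_X_sub_C_nextCoeff (s := s) f
  rw [nextCoeff_of_natDegree_pos (by rwa [pXC_natDegree])] at h
  rwa [pXC_natDegree] at h

lemma pXC_coeff_sub2 [DecidableEq ι] (s : Finset ι) (f : ι → ℚ) (hs : 2 ≤ s.card) :
    (∏ i ∈ s, (X - C (f i))).coeff (s.card - 2)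
      = ((∑ i ∈ s, f i) ^ 2 - ∑ i ∈ s, f i ^ 2) / 2 := by
  induction s using Finset.induction_on with
  | empty => simp at hs
  | @insert a s ha ih =>
    rw [Finset.card_insert_of_notMem ha] at hs ⊢
    rw [Finset.prod_insert ha, Finset.sum_insert ha, Finset.sum_insert ha, mul_comm]
    by_cases h2 : 2 ≤ s.card
    · have hidx : s.card + 1 - 2 = (s.card - 2) + 1 := by omega
      have hidx2 : s.card - 2 + 1 = s.card - 1 := by omega
      rw [hidx, Polynomial.coeff_mul_X_sub_C, ih h2, hidx2,
        pXC_coeff_pred s f (by omega)]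
      ring
    · have h1 : s.card = 1 := by omega
      obtain ⟨b, rfl⟩ := Finset.card_eq_one.1 h1
      simp only [Finset.card_singleton, Finset.prod_singleton, Finset.sum_singleton]
      norm_num [Polynomial.mul_coeff_zero]
      ring

end PXC

private theorem KRI_aux (m : ℕ) (x : Fin (m + 2) → ℚ) (hx : Function.Injective x) :
    ∑ i, x i * ∏ j ∈ Finset.univ.erase i, ((x i - 1 - x j) / (x i - x j))
      = (∑ i, x i) - ((m + 2 : ℕ) : ℚ) * (((m + 2 : ℕ) : ℚ) - 1) / 2 := by
  have hcard : (Finset.univ : Finset (Fin (m + 2))).card = m + 2 := Finset.card_fin _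
  have hecard : ∀ i : Fin (m + 2), (Finset.univ.erase i).card = m + 1 := fun i => by
    rw [Finset.card_erase_of_mem (Finset.mem_univ i), hcard]
    omega

  have hsub : ∀ {i j : Fin (m + 2)}, i ≠ j → x i - x j ≠ 0 :=
    fun {i j} h => sub_ne_zero.2 (fun he => h (hx he))
  set cc : Fin (m + 2) → ℚ :=
    fun i => -∏ j ∈ Finset.univ.erase i, ((x i - 1 - x j) / (x i - x j)) with hcc
  have hcci : ∀ i, cc i = -∏ j ∈ Finset.univ.erase i, ((x i - 1 - x j) / (x i - x j)) :=
    fun i => rfl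
  set P : ℚ[X] := ∏ j, (X - C (x j)) with hP
  set Q : ℚ[X] := ∏ j, (X - C (x j + 1)) with hQ
  set R : ℚ[X] := ∑ i, C (cc i) * ∏ j ∈ Finset.univ.erase i, (X - C (x j)) with hR
  have hdegR : R.degree < ((m + 2 : ℕ) : WithBot ℕ) := by
    refine lt_of_le_of_lt (Polynomial.degree_sum_le _ _) ?_
    rw [Finset.sup_lt_iff (by exact_mod_cast WithBot.bot_lt_coe _)]
    intro i _
    refine lt_of_le_of_lt (Polynomial.degree_mul_le _ _) ?_
    refine lt_of_le_of_lt (add_le_add Polynomial.degree_C_le (le_of_eq (pXC_degree _ x))) ?_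
    rw [hecard i, zero_add]
    exact_mod_cast Nat.lt_succ_self (m + 1)
  have hQP : Q = P + R := by
    have hW : Q - (P + R) = 0 := by
      by_cases hW0 : Q - (P + R) = 0
      · exact hW0
      refine Polynomial.eq_zero_of_natDegree_lt_card_of_eval_eq_zero _ hx (fun i => ?_) ?_
      · have hevP : P.eval (x i) = 0 := by
          rw [hP, Polynomial.eval_prod]
          exact Finset.prod_eq_zero (Finset.mem_univ i) (by simp)
        have hevR : R.eval (x i) = -∏ j ∈ Finset.univ.erase i, (x i - 1 - x j) := by
          rw [hR, Polynomial.eval_finset_sum]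
          rw [Finset.sum_eq_single i]
          · rw [Polynomial.eval_mul, Polynomial.eval_C, Polynomial.eval_prod]
            simp only [Polynomial.eval_sub, Polynomial.eval_X, Polynomial.eval_C]
            rw [hcci i, Finset.prod_div_distrib, neg_mul, neg_inj, div_mul_cancel₀]
            exact Finset.prod_ne_zero_iff.2 (fun j hj => hsub (Finset.ne_of_mem_erase hj).symm)
          · intro k _ hki
            rw [Polynomial.eval_mul, Polynomial.eval_prod]
            refine mul_eq_zero_of_right _ (Finset.prod_eq_zero
              (Finset.mem_erase.2 ⟨hki.symm, Finset.mem_univ i⟩) (by simp))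
          · intro h; exact absurd (Finset.mem_univ i) h
        have hevQ : Q.eval (x i) = -∏ j ∈ Finset.univ.erase i, (x i - 1 - x j) := by
          rw [hQ, Polynomial.eval_prod]
          simp only [Polynomial.eval_sub, Polynomial.eval_X, Polynomial.eval_C]
          rw [← Finset.mul_prod_erase _ _ (Finset.mem_univ i)]
          have h1 : x i - (x i + 1) = -1 := by ring
          rw [h1, neg_one_mul, neg_inj]
          exact Finset.prod_congr rfl (fun j _ => by ring)
        simp [hevQ, hevP, hevR]
      · rw [Polynomial.natDegree_lt_iff_degree_lt hW0, Fintype.card_fin]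
        have h1 : (Q - P).degree < ((m + 2 : ℕ) : WithBot ℕ) := by
          refine lt_of_lt_of_le (Polynomial.degree_sub_lt ?_ (pXC_monic _ _).ne_zero ?_) ?_
          · rw [hQ, hP, pXC_degree, pXC_degree]
          · rw [hQ, hP, (pXC_monic _ _).leadingCoeff, (pXC_monic _ _).leadingCoeff]
          · exact le_of_eq (by rw [hQ, pXC_degree, hcard])
        have h2 : Q - (P + R) = (Q - P) - R := by ring
        rw [h2]
        exact lt_of_le_of_lt (Polynomial.degree_sub_le _ _) (max_lt h1 hdegR)
    exact sub_eq_zero.1 hW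
  -- coefficient at m+1
  have hQtop : Q.coeff (m + 1) = -∑ j, (x j + 1) := by
    have h := pXC_coeff_pred Finset.univ (fun j : Fin (m + 2) => x j + 1) (by rw [hcard]; omega)
    rwa [hcard] at h
  have hPtop : P.coeff (m + 1) = -∑ j, x j := by
    have h := pXC_coeff_pred Finset.univ x (by rw [hcard]; omega)
    rwa [hcard] at h
  have hRtop : R.coeff (m + 1) = ∑ i, cc i := by
    rw [hR, Polynomial.finset_sum_coeff]
    refine Finset.sum_congr rfl (fun i _ => ?_)
    rw [Polynomial.coeff_C_mul]
    have h := pXC_coeff_card (Finset.univ.erase i) x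
    rw [hecard i] at h
    rw [h, mul_one]
  have hsumc : ∑ i, cc i = -((m : ℚ) + 2) := by
    have h := congrArg (fun p : ℚ[X] => p.coeff (m + 1)) hQP
    simp only [Polynomial.coeff_add] at h
    rw [hQtop, hPtop, hRtop, Finset.sum_add_distrib, Finset.sum_const, hcard] at h
    simp only [nsmul_eq_mul, mul_one] at h
    push_cast at h
    linarith
  -- coefficient at m
  have hQm : Q.coeff m = ((∑ j, (x j + 1)) ^ 2 - ∑ j, (x j + 1) ^ 2) / 2 := by
    have h := pXC_coeff_sub2 Finset.univ (fun j : Fin (m + 2) => x j + 1) (by rw [hcard]; omega)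
    rwa [hcard] at h
  have hPm : P.coeff m = ((∑ j, x j) ^ 2 - ∑ j, (x j) ^ 2) / 2 := by
    have h := pXC_coeff_sub2 Finset.univ x (by rw [hcard]; omega)
    rwa [hcard] at h
  have hRm : R.coeff m = ∑ i, cc i * (x i - ∑ j, x j) := by
    rw [hR, Polynomial.finset_sum_coeff]
    refine Finset.sum_congr rfl (fun i _ => ?_)
    rw [Polynomial.coeff_C_mul]
    have h := pXC_coeff_pred (Finset.univ.erase i) x (by rw [hecard i]; omega)
    rw [hecard i, Nat.add_sub_cancel] at h
    rw [h, Finset.sum_erase_eq_sub (Finset.mem_univ i)]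
    ring
  have hSC : ∑ i, cc i * x i = -(∑ j, x j) + ((m : ℚ) + 2) * ((m : ℚ) + 1) / 2 := by
    have h := congrArg (fun p : ℚ[X] => p.coeff m) hQP
    simp only [Polynomial.coeff_add] at h
    rw [hQm, hPm, hRm] at h
    have e1 : ∑ j, (x j + 1) = (∑ j, x j) + ((m : ℚ) + 2) := by
      rw [Finset.sum_add_distrib, Finset.sum_const, hcard]
      push_cast
      ring
    have e2 : ∑ j, (x j + 1) ^ 2 = (∑ j, (x j) ^ 2) + 2 * (∑ j, x j) + ((m : ℚ) + 2) := by
      have : ∀ j : Fin (m + 2), (x j + 1) ^ 2 = x j ^ 2 + 2 * x j + 1 := fun j => by ring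
      rw [Finset.sum_congr rfl (fun j _ => this j), Finset.sum_add_distrib,
        Finset.sum_add_distrib, ← Finset.mul_sum, Finset.sum_const, hcard]
      push_cast
      ring
    have e3 : ∑ i, cc i * (x i - ∑ j, x j)
        = (∑ i, cc i * x i) - (∑ i, cc i) * (∑ j, x j) := by
      rw [Finset.sum_mul]
      rw [← Finset.sum_sub_distrib]
      exact Finset.sum_congr rfl (fun i _ => by ring)
    rw [e1, e2, e3, hsumc] at h
    linear_combination -h
  have hfin : ∀ i, ∏ j ∈ Finset.univ.erase i, ((x i - 1 - x j) / (x i - x j)) = -cc i :=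
    fun i => by rw [hcci i, neg_neg]
  calc ∑ i, x i * ∏ j ∈ Finset.univ.erase i, ((x i - 1 - x j) / (x i - x j))
      = ∑ i, -(cc i * x i) := Finset.sum_congr rfl (fun i _ => by rw [hfin i]; ring)
    _ = -∑ i, cc i * x i := by rw [← Finset.sum_neg_distrib]
    _ = (∑ i, x i) - ((m + 2 : ℕ) : ℚ) * (((m + 2 : ℕ) : ℚ) - 1) / 2 := by
        rw [hSC]
        push_cast
        ring

/-- The key rational identity. -/
theorem KRI : ∀ {n : ℕ} (x : Fin n → ℚ), Function.Injective x →
    ∑ i, x i * ∏ j ∈ Finset.univ.erase i, ((x i - 1 - x j) / (x i - x j))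
      = (∑ i, x i) - (n : ℚ) * ((n : ℚ) - 1) / 2
  | 0, _, _ => by simp
  | 1, x, _ => by simp [Fin.sum_univ_one]
  | (m + 2), x, hx => by
      have := KRI_aux m x hx
      push_cast at this ⊢
      convert this using 2



section Frobenius
variable {d c : ℕ}

noncomputable def xq (l : Fin d → ℕ) (i : Fin d) : ℚ := (l i : ℚ) + ((i : ℕ) : ℚ)

def Pairs (d : ℕ) : Finset (Fin d × Fin d) := Finset.univ.filter (fun p => p.1 < p.2)

noncomputable def Vq (l : Fin d → ℕ) : ℚ := ∏ p ∈ Pairs d, (xq l p.2 - xq l p.1)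

noncomputable def Fq (l : Fin d → ℕ) : ℚ := ∏ i, ((l i + (i : ℕ)).factorial : ℚ)

lemma xq_strictMono {l : Fin d → ℕ} (hl : Monotone l) : StrictMono (xq l) := by
  intro i j hij
  have h1 : l i ≤ l j := hl hij.le
  have h2 : (i : ℕ) < (j : ℕ) := hij
  unfold xq
  have h3 : (l i : ℚ) ≤ l j := by exact_mod_cast h1
  have h4 : ((i : ℕ) : ℚ) < ((j : ℕ) : ℚ) := by exact_mod_cast h2
  linarith

lemma xq_inj {l : Fin d → ℕ} (hl : Monotone l) : Function.Injective (xq l) :=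
  (xq_strictMono hl).injective

lemma prod_range_sub_factorial (n : ℕ) :
    ∏ i ∈ Finset.range n, ((n : ℚ) - i) = (n.factorial : ℚ) := by
  have h := Finset.prod_range_reflect (fun i => (n : ℚ) - i) n
  rw [← h, ← Finset.prod_range_add_one_eq_factorial n]
  push_cast
  refine Finset.prod_congr rfl (fun i hi => ?_)
  have hi' := Finset.mem_range.1 hi
  have h2 : ((n - 1 - i : ℕ) : ℚ) = (n : ℚ) - 1 - i := by
    have e : n - 1 - i + (1 + i) = n := by omega
    have := congrArg (fun k : ℕ => (k : ℚ)) e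
    push_cast at this
    linarith
  rw [h2]; ring

lemma pairs_prod (d : ℕ) (f : Fin d → Fin d → ℚ) :
    ∏ p ∈ Pairs d, f p.1 p.2 = ∏ j, ∏ i ∈ Finset.Iio j, f i j := by
  rw [← Finset.prod_sigma Finset.univ (fun j => Finset.Iio j)
    (fun q : Σ _ : Fin d, Fin d => f q.2 q.1)]
  refine Finset.prod_bij' (fun p _ => (⟨p.2, p.1⟩ : Σ _ : Fin d, Fin d))
    (fun q _ => (q.2, q.1)) ?_ ?_ ?_ ?_ ?_
  · intro p hp
    simp only [Pairs, Finset.mem_filter, Finset.mem_univ, true_and] at hp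
    simp [Finset.mem_sigma, Finset.mem_Iio, hp]
  · intro q hq
    simp only [Finset.mem_sigma, Finset.mem_univ, true_and, Finset.mem_Iio] at hq
    simp [Pairs, hq]
  · intro p _; rfl
  · intro q _; rfl
  · intro p _; rfl

lemma prod_Iio_val {j : Fin d} (f : ℕ → ℚ) :
    ∏ i ∈ Finset.Iio j, f (i : ℕ) = ∏ i ∈ Finset.range (j : ℕ), f i := by
  refine Finset.prod_bij' (fun i _ => (i : ℕ))
    (fun i hi => (⟨i, lt_trans (Finset.mem_range.1 hi) j.isLt⟩ : Fin d)) ?_ ?_ ?_ ?_ ?_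
  · intro i hi
    simp only [Finset.mem_Iio] at hi
    simp [Finset.mem_range]
    exact hi
  · intro i hi
    simp only [Finset.mem_range] at hi
    simp [Finset.mem_Iio, Fin.lt_def]
    exact hi
  · intro i _; rfl
  · intro i _; rfl
  · intro i _; rfl

lemma Vq_const (r : ℕ) :
    Vq (fun _ : Fin d => r) = ∏ i : Fin d, ((i : ℕ).factorial : ℚ) := by
  rw [Vq, pairs_prod d (fun i j => xq (fun _ : Fin d => r) j - xq (fun _ : Fin d => r) i)]
  refine Finset.prod_congr rfl (fun j _ => ?_)
  have h1 : ∀ i : Fin d, xq (fun _ : Fin d => r) j - xq (fun _ : Fin d => r) i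
      = ((j : ℕ) : ℚ) - ((i : ℕ) : ℚ) := by
    intro i; unfold xq; ring
  rw [Finset.prod_congr rfl (fun i _ => h1 i)]
  rw [prod_Iio_val (fun i => ((j : ℕ) : ℚ) - (i : ℕ))]
  exact_mod_cast prod_range_sub_factorial (j : ℕ)

lemma Fq_update {l : Fin d → ℕ} {i₀ : Fin d} (h0 : 0 < l i₀) :
    Fq l = Fq (update l i₀ (l i₀ - 1)) * xq l i₀ := by
  have hprod : (∏ j ∈ Finset.univ.erase i₀, ((update l i₀ (l i₀ - 1) j + (j : ℕ)).factorial : ℚ))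
      = ∏ j ∈ Finset.univ.erase i₀, ((l j + (j : ℕ)).factorial : ℚ) :=
    Finset.prod_congr rfl (fun j hj => by rw [update_of_ne (Finset.ne_of_mem_erase hj)])
  rw [Fq, Fq, ← Finset.mul_prod_erase Finset.univ _ (Finset.mem_univ i₀),
    ← Finset.mul_prod_erase Finset.univ
      (fun i => ((update l i₀ (l i₀ - 1) i + (i : ℕ)).factorial : ℚ)) (Finset.mem_univ i₀),
    hprod, update_self]
  have key : ((l i₀ + (i₀ : ℕ)).factorial : ℚ)
      = ((l i₀ - 1 + (i₀ : ℕ)).factorial : ℚ) * xq l i₀ := by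
    have h1 : l i₀ + (i₀ : ℕ) = (l i₀ - 1 + (i₀ : ℕ)) + 1 := by omega
    rw [h1, Nat.factorial_succ]
    have h2 : ((l i₀ - 1 + (i₀ : ℕ) + 1 : ℕ) : ℚ) = xq l i₀ := by
      have e : l i₀ - 1 + (i₀ : ℕ) + 1 = l i₀ + (i₀ : ℕ) := by omega
      rw [e]; unfold xq; push_cast; ring
    push_cast
    push_cast at h2
    rw [h2]
    ring
  rw [key]
  ring

lemma Vq_update {l : Fin d → ℕ} (hl : Monotone l) {i₀ : Fin d} (h0 : 0 < l i₀) :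
    Vq (update l i₀ (l i₀ - 1))
      = Vq l * ∏ j ∈ Finset.univ.erase i₀, ((xq l i₀ - 1 - xq l j) / (xq l i₀ - xq l j)) := by
  classical
  have hxj : ∀ j : Fin d, j ≠ i₀ → xq (update l i₀ (l i₀ - 1)) j = xq l j := by
    intro j hj; unfold xq; rw [update_of_ne hj]
  have hxi0 : xq (update l i₀ (l i₀ - 1)) i₀ = xq l i₀ - 1 := by
    unfold xq; rw [update_self]
    have e : ((l i₀ - 1 : ℕ) : ℚ) = (l i₀ : ℚ) - 1 := by
      have e2 : (l i₀ - 1) + 1 = l i₀ := by omega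
      have := congrArg (fun k : ℕ => (k : ℚ)) e2
      push_cast at this
      linarith
    rw [e]; ring
  have hne : ∀ j : Fin d, j ≠ i₀ → xq l i₀ - xq l j ≠ 0 := fun j hj =>
    sub_ne_zero.2 (fun he => hj (xq_inj hl he).symm)
  have split : ∀ y : Fin d → ℚ, (∏ p ∈ Pairs d, (y p.2 - y p.1))
      = (∏ j ∈ Finset.univ.filter (fun j => i₀ < j), (y j - y i₀))
        * ((∏ i ∈ Finset.univ.filter (fun i => i < i₀), (y i₀ - y i))
        * (∏ p ∈ (Pairs d).filter (fun p => ¬p.1 = i₀ ∧ ¬p.2 = i₀), (y p.2 - y p.1))) := by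
    intro y
    rw [← Finset.prod_filter_mul_prod_filter_not (Pairs d) (fun p => p.1 = i₀) _,
      ← Finset.prod_filter_mul_prod_filter_not ((Pairs d).filter (fun p => ¬p.1 = i₀))
        (fun p => p.2 = i₀) _, Finset.filter_filter, Finset.filter_filter]
    congr 1
    · refine Finset.prod_bij' (fun p _ => p.2) (fun j _ => (i₀, j)) ?_ ?_ ?_ ?_ ?_
      · intro p hp
        simp only [Pairs, Finset.mem_filter, Finset.mem_univ, true_and] at hp
        simp only [Finset.mem_filter, Finset.mem_univ, true_and]
        rw [← hp.2]; exact hp.1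
      · intro j hj
        simp only [Finset.mem_filter, Finset.mem_univ, true_and] at hj
        simp [Pairs, hj]
      · intro p hp
        simp only [Pairs, Finset.mem_filter] at hp
        exact Prod.ext hp.2.symm rfl
      · intro j _; rfl
      · intro p hp
        simp only [Pairs, Finset.mem_filter] at hp
        rw [hp.2]
    congr 1
    · refine Finset.prod_bij' (fun p _ => p.1) (fun i _ => (i, i₀)) ?_ ?_ ?_ ?_ ?_
      · intro p hp
        simp only [Pairs, Finset.mem_filter, Finset.mem_univ, true_and] at hp
        simp only [Finset.mem_filter, Finset.mem_univ, true_and]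
        rw [← hp.2.2]; exact hp.1
      · intro i hi
        simp only [Finset.mem_filter, Finset.mem_univ, true_and] at hi
        simp only [Pairs, Finset.mem_filter, Finset.mem_univ, true_and, and_true]
        exact ⟨hi, fun h => absurd (h ▸ hi) (lt_irrefl i₀)⟩
      · intro p hp
        simp only [Pairs, Finset.mem_filter] at hp
        exact Prod.ext rfl hp.2.2.symm
      · intro i _; rfl
      · intro p hp
        simp only [Pairs, Finset.mem_filter] at hp
        rw [hp.2.2]
  have hCeq : (∏ p ∈ (Pairs d).filter (fun p => ¬p.1 = i₀ ∧ ¬p.2 = i₀),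
        (xq (update l i₀ (l i₀ - 1)) p.2 - xq (update l i₀ (l i₀ - 1)) p.1))
      = ∏ p ∈ (Pairs d).filter (fun p => ¬p.1 = i₀ ∧ ¬p.2 = i₀), (xq l p.2 - xq l p.1) := by
    refine Finset.prod_congr rfl (fun p hp => ?_)
    simp only [Finset.mem_filter] at hp
    rw [hxj _ hp.2.2, hxj _ hp.2.1]
  have erase_gt : (Finset.univ.erase i₀).filter (fun j => i₀ < j)
      = Finset.univ.filter (fun j => i₀ < j) := by
    ext j
    simp only [Finset.mem_filter, Finset.mem_erase, Finset.mem_univ, true_and, and_true]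
    exact ⟨fun h => h.2, fun h => ⟨ne_of_gt h, h⟩⟩
  have erase_lt : (Finset.univ.erase i₀).filter (fun j => ¬i₀ < j)
      = Finset.univ.filter (fun j => j < i₀) := by
    ext j
    simp only [Finset.mem_filter, Finset.mem_erase, Finset.mem_univ, true_and, and_true]
    constructor
    · rintro ⟨h1, h2⟩
      exact lt_of_le_of_ne (not_lt.1 h2) h1
    · intro h
      exact ⟨ne_of_lt h, not_lt.2 h.le⟩
  have ratio_split : ∏ j ∈ Finset.univ.erase i₀, ((xq l i₀ - 1 - xq l j) / (xq l i₀ - xq l j))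
      = (∏ j ∈ Finset.univ.filter (fun j => i₀ < j), ((xq l i₀ - 1 - xq l j) / (xq l i₀ - xq l j)))
        * (∏ j ∈ Finset.univ.filter (fun j => j < i₀),
            ((xq l i₀ - 1 - xq l j) / (xq l i₀ - xq l j))) := by
    rw [← Finset.prod_filter_mul_prod_filter_not (Finset.univ.erase i₀) (fun j => i₀ < j) _,
      erase_gt, erase_lt]
  have hA : (∏ j ∈ Finset.univ.filter (fun j => i₀ < j),
        (xq (update l i₀ (l i₀ - 1)) j - xq (update l i₀ (l i₀ - 1)) i₀))
      = (∏ j ∈ Finset.univ.filter (fun j => i₀ < j), (xq l j - xq l i₀))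
        * (∏ j ∈ Finset.univ.filter (fun j => i₀ < j),
            ((xq l i₀ - 1 - xq l j) / (xq l i₀ - xq l j))) := by
    rw [← Finset.prod_mul_distrib]
    refine Finset.prod_congr rfl (fun j hj => ?_)
    simp only [Finset.mem_filter, Finset.mem_univ, true_and] at hj
    rw [hxj _ (ne_of_gt hj), hxi0]
    have := hne j (ne_of_gt hj)
    field_simp
    try ring
  have hB : (∏ j ∈ Finset.univ.filter (fun j => j < i₀),
        (xq (update l i₀ (l i₀ - 1)) i₀ - xq (update l i₀ (l i₀ - 1)) j))
      = (∏ j ∈ Finset.univ.filter (fun j => j < i₀), (xq l i₀ - xq l j))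
        * (∏ j ∈ Finset.univ.filter (fun j => j < i₀),
            ((xq l i₀ - 1 - xq l j) / (xq l i₀ - xq l j))) := by
    rw [← Finset.prod_mul_distrib]
    refine Finset.prod_congr rfl (fun j hj => ?_)
    simp only [Finset.mem_filter, Finset.mem_univ, true_and] at hj
    rw [hxj _ (ne_of_lt hj), hxi0]
    have := hne j (ne_of_lt hj)
    field_simp
    try ring
  rw [Vq, Vq, split (xq (update l i₀ (l i₀ - 1))), split (xq l), hCeq, hA, hB, ratio_split]
  ring

lemma G_zero (S : Finset (Cell d c)) : G d c 0 S = 1 := by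
  rw [G, Finset.filter_true_of_mem
    (fun u _ => ⟨fun p => p.elim0, fun p => p.elim0, fun p => p.elim0⟩)]
  simp

lemma sum_fin_val (d : ℕ) : ∑ i : Fin d, ((i : ℕ) : ℚ) = (d : ℚ) * ((d : ℚ) - 1) / 2 := by
  rcases Nat.eq_zero_or_pos d with rfl | hd
  · simp
  · have h := Finset.sum_range_id_mul_two d
    have h2 : (∑ i ∈ Finset.range d, (i : ℚ)) * 2 = (d : ℚ) * ((d : ℚ) - 1) := by
      have h3 := congrArg (fun k : ℕ => (k : ℚ)) h
      have h4 : ((d - 1 : ℕ) : ℚ) = (d : ℚ) - 1 := by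
        have e : (d - 1) + 1 = d := by omega
        have := congrArg (fun k : ℕ => (k : ℚ)) e
        push_cast at this
        linarith
      push_cast at h3
      rw [h4] at h3
      linarith
    rw [Fin.sum_univ_eq_sum_range (fun i => (i : ℚ)) d]
    linarith

theorem frob : ∀ (m : ℕ) (l : Fin d → ℕ), Monotone l → (∀ i, l i ≤ c) → (∑ i, l i) = m →
    (G d c m (diag c l) : ℚ) * Fq l = (m.factorial : ℚ) * Vq l := by
  intro m
  induction m with
  | zero =>
    intro l hml hlc hsum
    have hl0 : l = fun _ => 0 := by
      funext i
      have := Finset.single_le_sum (f := l) (fun j _ => Nat.zero_le _) (Finset.mem_univ i)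
      omega
    subst hl0
    rw [G_zero, Vq_const 0, Nat.factorial_zero, Fq]
    push_cast
    simp
  | succ m ih =>
    intro l hml hlc hsum
    have hd0 : 0 < d := by
      by_contra h
      have hd : d = 0 := by omega
      subst hd
      simp at hsum
    have hxinj := xq_inj hml
    have hdiagcard : (diag c l).card = m + 1 := by rw [card_diag l hlc, hsum]
    rw [G_succ _ _ hdiagcard]
    push_cast [Nat.cast_sum]
    have hMx : ∑ a ∈ Mx (diag c l), (G d c m ((diag c l).erase a) : ℚ)
        = ∑ i ∈ Finset.univ.filter (Rem l), (G d c m (diag c (update l i (l i - 1))) : ℚ) := by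
      refine Finset.sum_bij' (fun a _ => a.1)
        (fun i hi => (i, (⟨l i - 1, by
          have hi' := (Finset.mem_filter.1 hi).2
          have h1 := hlc i
          have h2 := hi'.1
          omega⟩ : Fin c))) ?_ ?_ ?_ ?_ ?_
      · intro a ha
        have h := (mem_mx_diag hml hlc).1 ha
        simp only [Finset.mem_filter, Finset.mem_univ, true_and]
        exact h.1
      · intro i hi
        have hi' := (Finset.mem_filter.1 hi).2
        exact (mem_mx_diag hml hlc).2 ⟨hi', rfl⟩
      · intro a ha
        have h := (mem_mx_diag hml hlc).1 ha
        exact Prod.ext rfl (Fin.ext h.2.symm)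
      · intro i _
        rfl
      · intro a ha
        obtain ⟨i0, k0⟩ := a
        have h := (mem_mx_diag hml hlc).1 ha
        rw [erase_diag h.1 h.2]
    rw [hMx, Finset.sum_mul]
    have hterm : ∀ i ∈ Finset.univ.filter (Rem l),
        (G d c m (diag c (update l i (l i - 1))) : ℚ) * Fq l
          = ((m.factorial : ℚ) * Vq l) * (xq l i * ∏ j ∈ Finset.univ.erase i,
              ((xq l i - 1 - xq l j) / (xq l i - xq l j))) := by
      intro i hi
      obtain ⟨h0, hstr⟩ := (Finset.mem_filter.1 hi).2
      have hml' := monotone_update hml ⟨h0, hstr⟩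
      have hlc' : ∀ j, update l i (l i - 1) j ≤ c := by
        intro j
        rcases eq_or_ne j i with rfl | hne
        · rw [update_self]; exact le_trans (Nat.pred_le _) (hlc j)
        · rw [update_of_ne hne]; exact hlc j
      have hsum' : ∑ j, update l i (l i - 1) j = m := by
        rw [Finset.sum_update_of_mem (Finset.mem_univ i), Finset.sdiff_singleton_eq_erase]
        rw [← Finset.add_sum_erase _ l (Finset.mem_univ i)] at hsum
        omega
      have hIH := ih (update l i (l i - 1)) hml' hlc' hsum'
      rw [Vq_update hml h0] at hIH
      rw [Fq_update h0]
      calc (G d c m (diag c (update l i (l i - 1))) : ℚ) * (Fq (update l i (l i - 1)) * xq l i)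
          = ((G d c m (diag c (update l i (l i - 1))) : ℚ) * Fq (update l i (l i - 1))) * xq l i := by
            ring
        _ = (m.factorial : ℚ) * (Vq l * ∏ j ∈ Finset.univ.erase i,
              ((xq l i - 1 - xq l j) / (xq l i - xq l j))) * xq l i := by rw [hIH]
        _ = _ := by ring
    rw [Finset.sum_congr rfl hterm, ← Finset.mul_sum]
    have castpred : ∀ i : Fin d, 0 < (i : ℕ) → (((i : ℕ) - 1 : ℕ) : ℚ) = ((i : ℕ) : ℚ) - 1 := by
      intro i hi0
      have e : ((i : ℕ) - 1) + 1 = (i : ℕ) := by omega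
      have := congrArg (fun k : ℕ => (k : ℚ)) e
      push_cast at this
      linarith
    have hzero : ∀ i ∈ Finset.univ.filter (fun i => ¬ Rem l i),
        xq l i * ∏ j ∈ Finset.univ.erase i,
          ((xq l i - 1 - xq l j) / (xq l i - xq l j)) = 0 := by
      intro i hi
      have hnr := (Finset.mem_filter.1 hi).2
      by_cases h0 : l i = 0
      · rcases Nat.eq_zero_or_pos (i : ℕ) with hi0 | hi0
        · have hx0 : xq l i = 0 := by unfold xq; rw [h0, hi0]; norm_num
          rw [hx0, zero_mul]
        · have hip : (i : ℕ) - 1 < d := by omega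
          have hipi : (⟨(i : ℕ) - 1, hip⟩ : Fin d) ≠ i := by
            simp only [ne_eq, Fin.ext_iff]
            omega
          have hlip : l ⟨(i : ℕ) - 1, hip⟩ = 0 := by
            have h1 : (⟨(i : ℕ) - 1, hip⟩ : Fin d) ≤ i := by
              simp only [Fin.le_def]
              omega
            have := hml h1
            omega
          have hxip : xq l ⟨(i : ℕ) - 1, hip⟩ = xq l i - 1 := by
            unfold xq
            rw [hlip, h0, castpred i hi0]
            push_cast
            ring
          rw [Finset.prod_eq_zero (Finset.mem_erase.2 ⟨hipi, Finset.mem_univ _⟩)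
            (by rw [hxip]; simp), mul_zero]
      · rw [Rem] at hnr
        push_neg at hnr
        obtain ⟨j, hj, hlj⟩ := hnr (by omega)
        have hi0 : 0 < (i : ℕ) := by
          have : (j : ℕ) < (i : ℕ) := hj
          omega
        have hip : (i : ℕ) - 1 < d := by omega
        have hipi : (⟨(i : ℕ) - 1, hip⟩ : Fin d) ≠ i := by
          simp only [ne_eq, Fin.ext_iff]
          omega
        have hjle : j ≤ (⟨(i : ℕ) - 1, hip⟩ : Fin d) := by
          simp only [Fin.le_def]
          have : (j : ℕ) < (i : ℕ) := hj
          omega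
        have hile : (⟨(i : ℕ) - 1, hip⟩ : Fin d) ≤ i := by
          simp only [Fin.le_def]
          omega
        have hlip : l ⟨(i : ℕ) - 1, hip⟩ = l i := by
          have h1 := hml hjle
          have h2 := hml hile
          omega
        have hxip : xq l ⟨(i : ℕ) - 1, hip⟩ = xq l i - 1 := by
          unfold xq
          rw [hlip, castpred i hi0]
          ring
        rw [Finset.prod_eq_zero (Finset.mem_erase.2 ⟨hipi, Finset.mem_univ _⟩)
          (by rw [hxip]; simp), mul_zero]
    have hext : ∑ i ∈ Finset.univ.filter (Rem l),
        (xq l i * ∏ j ∈ Finset.univ.erase i, ((xq l i - 1 - xq l j) / (xq l i - xq l j)))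
        = ∑ i, xq l i * ∏ j ∈ Finset.univ.erase i,
            ((xq l i - 1 - xq l j) / (xq l i - xq l j)) := by
      rw [← Finset.sum_filter_add_sum_filter_not Finset.univ (Rem l)
        (fun i => xq l i * ∏ j ∈ Finset.univ.erase i,
          ((xq l i - 1 - xq l j) / (xq l i - xq l j)))]
      rw [Finset.sum_eq_zero hzero, add_zero]
    rw [hext, KRI (xq l) hxinj]
    have hsx : ∑ i, xq l i = ((m : ℚ) + 1) + (d : ℚ) * ((d : ℚ) - 1) / 2 := by
      unfold xq
      rw [Finset.sum_add_distrib, sum_fin_val d]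
      have hc : ∑ i, (l i : ℚ) = ((m : ℚ) + 1) := by
        have := congrArg (fun k : ℕ => (k : ℚ)) hsum
        push_cast at this
        linarith
      rw [hc]
    rw [hsx]
    have hfac : ((m + 1).factorial : ℚ) = ((m : ℚ) + 1) * (m.factorial : ℚ) := by
      rw [Nat.factorial_succ]; push_cast; ring
    rw [hfac]
    ring

lemma diag_const_top : diag c (fun _ : Fin d => c) = (Finset.univ : Finset (Cell d c)) := by
  ext a
  simp [diag, a.2.isLt]

theorem rect_count :
    (G d c (d * c) Finset.univ : ℚ) * ∏ i : Fin d, ((c + (i : ℕ)).factorial : ℚ)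
      = ((d * c).factorial : ℚ) * ∏ i : Fin d, ((i : ℕ).factorial : ℚ) := by
  have h := frob (d := d) (c := c) (d * c) (fun _ => c) monotone_const (fun _ => le_refl c)
    (by rw [Finset.sum_const, Finset.card_univ, Fintype.card_fin, smul_eq_mul])
  rw [diag_const_top, Vq_const] at h
  simp only [Fq] at h
  exact h

end Frobenius

section Measure
variable (d c : ℕ)

abbrev XSp (d c : ℕ) := Cell d c → ℝ

def cube (t : ℝ) : Set (XSp d c) := Set.univ.pi (fun _ => Set.Ioo 0 t)

def chamber (t : ℝ) (u : Fin (d * c) → Cell d c) : Set (XSp d c) :=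
  {x | ∀ p q : Fin (d * c), p < q → x (u p) < x (u q)} ∩ cube d c t

def SSet (t : ℝ) : Set (XSp d c) :=
  {x | ∀ a b : Cell d c, cle a b → a ≠ b → x a < x b} ∩ cube d c t

lemma measurable_cube (t : ℝ) : MeasurableSet (cube d c t) :=
  MeasurableSet.univ_pi fun _ => measurableSet_Ioo

lemma measurable_chamber (t : ℝ) (u : Fin (d * c) → Cell d c) :
    MeasurableSet (chamber d c t u) := by
  refine MeasurableSet.inter ?_ (measurable_cube d c t)
  have h : {x : XSp d c | ∀ p q : Fin (d * c), p < q → x (u p) < x (u q)}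
      = ⋂ p, ⋂ q, ⋂ (_ : p < q), {x : XSp d c | x (u p) < x (u q)} := by
    ext x; simp [Set.mem_iInter]
  rw [h]
  exact MeasurableSet.iInter fun p => MeasurableSet.iInter fun q =>
    MeasurableSet.iInter fun _ =>
      measurableSet_lt (measurable_pi_apply _) (measurable_pi_apply _)

lemma measurable_SSet (t : ℝ) : MeasurableSet (SSet d c t) := by
  refine MeasurableSet.inter ?_ (measurable_cube d c t)
  have h : {x : XSp d c | ∀ a b : Cell d c, cle a b → a ≠ b → x a < x b}
      = ⋂ a, ⋂ b, ⋂ (_ : cle a b), ⋂ (_ : a ≠ b), {x : XSp d c | x a < x b} := by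
    ext x; simp [Set.mem_iInter]
  rw [h]
  exact MeasurableSet.iInter fun a => MeasurableSet.iInter fun b =>
    MeasurableSet.iInter fun _ => MeasurableSet.iInter fun _ =>
      measurableSet_lt (measurable_pi_apply _) (measurable_pi_apply _)

lemma volume_cube (t : ℝ) : volume (cube d c t) = ENNReal.ofReal t ^ (d * c) := by
  rw [cube, volume_pi_pi]
  simp [Real.volume_Ioo, Finset.prod_const, Finset.card_univ, Fintype.card_prod]

lemma null_pair {a b : Cell d c} (hab : a ≠ b) : volume {x : XSp d c | x a = x b} = 0 := by
  have hsub : {x : XSp d c | x a = x b}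
      = (LinearMap.ker ((LinearMap.proj a : (XSp d c) →ₗ[ℝ] ℝ) - LinearMap.proj b) :
          Submodule ℝ (XSp d c)) := by
    ext x
    simp [LinearMap.mem_ker, sub_eq_zero, eq_comm]
  rw [hsub]
  refine Measure.addHaar_submodule _ _ ?_
  intro htop
  have hmem : Pi.single a (1 : ℝ) ∈
      LinearMap.ker ((LinearMap.proj a : (XSp d c) →ₗ[ℝ] ℝ) - LinearMap.proj b) :=
    htop ▸ Submodule.mem_top
  rw [LinearMap.mem_ker, LinearMap.sub_apply, LinearMap.proj_apply, LinearMap.proj_apply,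
    Pi.single_eq_same, Pi.single_eq_of_ne (Ne.symm hab)] at hmem
  norm_num at hmem

lemma null_noninj : volume {x : XSp d c | ¬ Function.Injective x} = 0 := by
  have hsub : {x : XSp d c | ¬ Function.Injective x}
      ⊆ ⋃ (a : Cell d c), ⋃ (b : Cell d c), ⋃ (_ : a ≠ b), {x : XSp d c | x a = x b} := by
    intro x hx
    simp only [Function.Injective, not_forall, Set.mem_setOf_eq] at hx
    obtain ⟨a, b, hxab, hab⟩ := hx
    exact Set.mem_iUnion.2 ⟨a, Set.mem_iUnion.2 ⟨b, Set.mem_iUnion.2 ⟨hab, hxab⟩⟩⟩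
  refine measure_mono_null hsub ?_
  exact measure_iUnion_null fun a => measure_iUnion_null fun b =>
    measure_iUnion_null fun hab => null_pair d c hab

lemma mp_comp (π : Cell d c ≃ Cell d c) :
    MeasurePreserving (fun x : XSp d c => x ∘ π) volume volume := by
  have h := (volume_measurePreserving_piCongrLeft (fun _ : Cell d c => ℝ) π).symm
  have he : (fun x : XSp d c => x ∘ π)
      = ⇑(MeasurableEquiv.piCongrLeft (fun _ : Cell d c => ℝ) π).symm := by
    funext x
    funext b
    simp [MeasurableEquiv.piCongrLeft, Equiv.piCongrLeft, Equiv.piCongrLeft']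
  rw [he]
  exact h

lemma chamber_inj {t : ℝ} {u : Fin (d * c) → Cell d c} (hu : Function.Bijective u)
    {x : XSp d c} (hx : x ∈ chamber d c t u) : Function.Injective x := by
  intro a b hab
  obtain ⟨p, rfl⟩ := hu.2 a
  obtain ⟨q, rfl⟩ := hu.2 b
  rcases lt_trichotomy p q with h | h | h
  · exact absurd hab (ne_of_lt (hx.1 p q h))
  · rw [h]
  · exact absurd hab.symm (ne_of_lt (hx.1 q p h))

lemma chamber_disjoint {t : ℝ} {u v : Fin (d * c) → Cell d c} (hu : Function.Bijective u)
    (hv : Function.Bijective v) (huv : u ≠ v) :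
    Disjoint (chamber d c t u) (chamber d c t v) := by
  rw [Set.disjoint_left]
  intro x hxu hxv
  apply huv
  have hxinj := chamber_inj d c hu hxu
  have hxu' : StrictMono (x ∘ u) := fun p q h => hxu.1 p q h
  have hxv' : StrictMono (x ∘ v) := fun p q h => hxv.1 p q h
  set E := Equiv.ofBijective u hu with hE
  have happ : ∀ q, u (E.symm (v q)) = v q := fun q => E.apply_symm_apply (v q)
  have hψ : StrictMono (fun q => E.symm (v q)) := by
    intro p q h
    have h1 : x (v p) < x (v q) := hxv' h
    rw [← happ p, ← happ q] at h1
    exact (StrictMono.lt_iff_lt hxu').1 h1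
  have hrange : Set.range (fun q => E.symm (v q)) = Set.range (id : Fin (d * c) → Fin (d * c)) := by
    rw [Set.range_id]
    rw [Set.range_eq_univ]
    exact E.symm.surjective.comp hv.2
  have hid := (hψ.range_inj strictMono_id).1 hrange
  funext q
  have : E.symm (v q) = q := congrFun hid q
  rw [← happ q, this]

lemma exists_chamber {t : ℝ} {x : XSp d c} (hx : x ∈ cube d c t)
    (hinj : Function.Injective x) :
    ∃ u : Fin (d * c) → Cell d c, Function.Bijective u ∧ StrictMono (x ∘ u)
      ∧ x ∈ chamber d c t u := by
  have hcard : Fintype.card (Cell d c) = d * c := by simp [Fintype.card_prod]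
  let β : Fin (d * c) ≃ Cell d c := (Fintype.equivFinOfCardEq hcard).symm
  let σ : Equiv.Perm (Fin (d * c)) := Tuple.sort (x ∘ β)
  have hmono : Monotone ((x ∘ β) ∘ σ) := Tuple.monotone_sort (x ∘ β)
  have hbij : Function.Bijective (fun p => β (σ p)) := β.bijective.comp σ.bijective
  have hsm : StrictMono (x ∘ fun p => β (σ p)) := by
    refine Monotone.strictMono_of_injective hmono ?_
    exact hinj.comp hbij.1
  exact ⟨fun p => β (σ p), hbij, hsm, fun p q h => hsm h, hx⟩

lemma chamber_vol_eq {t : ℝ} {u v : Fin (d * c) → Cell d c} (hu : Function.Bijective u)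
    (hv : Function.Bijective v) :
    volume (chamber d c t u) = volume (chamber d c t v) := by
  classical
  set Eu := Equiv.ofBijective u hu
  set Ev := Equiv.ofBijective v hv
  set π : Cell d c ≃ Cell d c := Ev.symm.trans Eu with hπ
  have happ : ∀ p, π (v p) = u p := by
    intro p
    show Eu (Ev.symm (v p)) = u p
    rw [show v p = Ev p from rfl, Ev.symm_apply_apply]
    rfl
  have hpre : chamber d c t u = (fun x : XSp d c => x ∘ π) ⁻¹' chamber d c t v := by
    ext x
    simp only [chamber, Set.mem_inter_iff, Set.mem_preimage, Set.mem_setOf_eq]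
    constructor
    · rintro ⟨h1, h2⟩
      refine ⟨fun p q h => ?_, fun a _ => h2 (π a) trivial⟩
      show x (π (v p)) < x (π (v q))
      rw [happ p, happ q]
      exact h1 p q h
    · rintro ⟨h1, h2⟩
      refine ⟨fun p q h => ?_, fun a _ => ?_⟩
      · have := h1 p q h
        show x (u p) < x (u q)
        rw [← happ p, ← happ q]
        exact this
      · have := h2 (π.symm a) trivial
        show x a ∈ Set.Ioo 0 t
        simpa [Function.comp, π.apply_symm_apply] using this
  rw [hpre]
  exact (mp_comp d c π).measure_preimage (measurable_chamber d c t v).nullMeasurableSet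

lemma card_bijs :
    (Finset.univ.filter (fun u : Fin (d * c) → Cell d c => Function.Bijective u)).card
      = (d * c).factorial := by
  classical
  rw [← Fintype.card_subtype]
  have e : {u : Fin (d * c) → Cell d c // Function.Bijective u} ≃ (Fin (d * c) ≃ Cell d c) :=
    { toFun := fun u => Equiv.ofBijective u.1 u.2
      invFun := fun e => ⟨e, e.bijective⟩
      left_inv := fun u => Subtype.ext rfl
      right_inv := fun e => Equiv.ext (fun q => rfl) }
  rw [Fintype.card_congr e,
    Fintype.card_equiv (Fintype.equivFinOfCardEq (by simp [Fintype.card_prod] :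
      Fintype.card (Cell d c) = d * c)).symm]
  simp

lemma cube_subset_union (t : ℝ) :
    cube d c t ⊆ (⋃ u ∈ Finset.univ.filter
        (fun u : Fin (d * c) → Cell d c => Function.Bijective u), chamber d c t u)
      ∪ {x : XSp d c | ¬ Function.Injective x} := by
  intro x hx
  by_cases hinj : Function.Injective x
  · obtain ⟨u, hub, _, hxc⟩ := exists_chamber d c hx hinj
    exact Or.inl (Set.mem_biUnion (Finset.mem_filter.2 ⟨Finset.mem_univ u, hub⟩) hxc)
  · exact Or.inr hinj

lemma chamber_volume {t : ℝ} (ht : 0 < t) {u : Fin (d * c) → Cell d c}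
    (hu : Function.Bijective u) :
    volume (chamber d c t u)
      = ENNReal.ofReal t ^ (d * c) / ((d * c).factorial : ENNReal) := by
  classical
  set Bs := Finset.univ.filter (fun u : Fin (d * c) → Cell d c => Function.Bijective u) with hBs
  have hdisj : (Bs : Set (Fin (d * c) → Cell d c)).PairwiseDisjoint (chamber d c t) := by
    intro a ha b hb hab
    simp only [hBs, Finset.coe_filter, Set.mem_setOf_eq] at ha hb
    exact chamber_disjoint d c ha.2 hb.2 hab
  have hsum : ∑ v ∈ Bs, volume (chamber d c t v)
      = volume (⋃ v ∈ Bs, chamber d c t v) :=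
    (measure_biUnion_finset hdisj (fun v _ => measurable_chamber d c t v)).symm
  have hcover : volume (⋃ v ∈ Bs, chamber d c t v) = ENNReal.ofReal t ^ (d * c) := by
    refine le_antisymm ?_ ?_
    · rw [← volume_cube d c t]
      refine measure_mono ?_
      refine Set.iUnion₂_subset fun v _ => ?_
      exact Set.inter_subset_right
    · rw [← volume_cube d c t]
      calc volume (cube d c t)
          ≤ volume ((⋃ v ∈ Bs, chamber d c t v) ∪ {x : XSp d c | ¬ Function.Injective x}) :=
            measure_mono (cube_subset_union d c t)
        _ ≤ volume (⋃ v ∈ Bs, chamber d c t v)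
              + volume {x : XSp d c | ¬ Function.Injective x} := measure_union_le _ _
        _ = volume (⋃ v ∈ Bs, chamber d c t v) := by rw [null_noninj, add_zero]
  have hconst : ∀ v ∈ Bs, volume (chamber d c t v) = volume (chamber d c t u) := by
    intro v hv
    simp only [hBs, Finset.mem_filter] at hv
    exact chamber_vol_eq d c hv.2 hu
  rw [Finset.sum_congr rfl hconst, Finset.sum_const, card_bijs d c, hcover, nsmul_eq_mul] at hsum
  exact (ENNReal.eq_div_iff (by exact_mod_cast Nat.factorial_ne_zero (d * c))
    (ENNReal.natCast_ne_top _)).2 hsum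

end Measure

section Measure2
variable (d c : ℕ)

lemma good_bij {u : Fin (d * c) → Cell d c} (hg : Good (Finset.univ : Finset (Cell d c)) u) :
    Function.Bijective u := by
  rw [Fintype.bijective_iff_injective_and_card]
  exact ⟨hg.2.1, by simp [Fintype.card_prod]⟩

lemma chamber_subset_SS {t : ℝ} {u : Fin (d * c) → Cell d c}
    (hg : Good (Finset.univ : Finset (Cell d c)) u) :
    chamber d c t u ⊆ SSet d c t := by
  intro x hx
  refine ⟨fun a b hab hne => ?_, hx.2⟩
  have hu := good_bij d c hg
  obtain ⟨p, rfl⟩ := hu.2 a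
  obtain ⟨q, rfl⟩ := hu.2 b
  exact hx.1 p q (hg.2.2 p q hab hne)

lemma SS_subset_union (t : ℝ) :
    SSet d c t ⊆ (⋃ u ∈ Finset.univ.filter
        (fun u : Fin (d * c) → Cell d c => Good (Finset.univ : Finset (Cell d c)) u),
        chamber d c t u)
      ∪ {x : XSp d c | ¬ Function.Injective x} := by
  intro x hx
  by_cases hinj : Function.Injective x
  · obtain ⟨u, hub, hsm, hxc⟩ := exists_chamber d c hx.2 hinj
    refine Or.inl (Set.mem_biUnion (Finset.mem_filter.2 ⟨Finset.mem_univ u, ?_⟩) hxc)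
    exact ⟨fun p => Finset.mem_univ _, hub.1,
      fun p q hle hne => hsm.lt_iff_lt.1 (hx.1 _ _ hle hne)⟩
  · exact Or.inr hinj

theorem volume_SS {t : ℝ} (ht : 0 < t) :
    volume (SSet d c t)
      = (G d c (d * c) Finset.univ : ENNReal)
          * (ENNReal.ofReal t ^ (d * c) / ((d * c).factorial : ENNReal)) := by
  set GB := Finset.univ.filter
    (fun u : Fin (d * c) → Cell d c => Good (Finset.univ : Finset (Cell d c)) u) with hGB
  have hdisj : (GB : Set (Fin (d * c) → Cell d c)).PairwiseDisjoint (chamber d c t) := by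
    intro a ha b hb hab
    simp only [hGB, Finset.coe_filter, Set.mem_setOf_eq] at ha hb
    exact chamber_disjoint d c (good_bij d c ha.2) (good_bij d c hb.2) hab
  have h1 : volume (SSet d c t) = volume (⋃ u ∈ GB, chamber d c t u) := by
    refine le_antisymm ?_ ?_
    · calc volume (SSet d c t)
          ≤ volume ((⋃ u ∈ GB, chamber d c t u) ∪ {x : XSp d c | ¬ Function.Injective x}) :=
            measure_mono (SS_subset_union d c t)
        _ ≤ volume (⋃ u ∈ GB, chamber d c t u) + volume {x : XSp d c | ¬ Function.Injective x} :=
            measure_union_le _ _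
        _ = volume (⋃ u ∈ GB, chamber d c t u) := by rw [null_noninj, add_zero]
    · refine measure_mono (Set.iUnion₂_subset fun u hu => ?_)
      exact chamber_subset_SS d c (Finset.mem_filter.1 hu).2
  rw [h1, measure_biUnion_finset hdisj (fun v _ => measurable_chamber d c t v)]
  have hconst : ∀ v ∈ GB, volume (chamber d c t v)
      = ENNReal.ofReal t ^ (d * c) / ((d * c).factorial : ENNReal) := by
    intro v hv
    exact chamber_volume d c ht (good_bij d c (Finset.mem_filter.1 hv).2)
  rw [Finset.sum_congr rfl hconst, Finset.sum_const, nsmul_eq_mul]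
  congr 1

end Measure2

section Transfer
variable (d c : ℕ)

/-- measurable equivalence between functions on a sigma type and nested functions -/
def sigEquiv : (∀ _ : (Σ _ : Fin d, Fin c), ℝ) ≃ᵐ (Fin d → Fin c → ℝ) where
  toEquiv := Equiv.piCurry (fun (_ : Fin d) (_ : Fin c) => ℝ)
  measurable_toFun := by
    refine measurable_pi_lambda _ (fun i => measurable_pi_lambda _ (fun k => ?_))
    show Measurable fun x : (∀ _ : (Σ _ : Fin d, Fin c), ℝ) => x ⟨i, k⟩
    exact measurable_pi_apply _
  measurable_invFun := by
    refine measurable_pi_lambda _ (fun p => ?_)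
    show Measurable fun y : Fin d → Fin c → ℝ => y p.1 p.2
    exact (measurable_pi_apply p.2).comp (measurable_pi_apply p.1)

lemma mp_sig : MeasurePreserving (sigEquiv d c) volume volume := by
  have hsymm : MeasurePreserving (sigEquiv d c).symm volume volume := by
    refine MeasurePreserving.mk ((sigEquiv d c).symm.measurable) ?_
    rw [show (volume : Measure (∀ _ : (Σ _ : Fin d, Fin c), ℝ))
      = Measure.pi (fun _ => volume) from rfl]
    refine (Measure.pi_eq (fun B hB => ?_)).symm
    rw [Measure.map_apply (sigEquiv d c).symm.measurable (MeasurableSet.univ_pi hB)]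
    have hpre : (sigEquiv d c).symm ⁻¹' (Set.univ.pi B)
        = Set.univ.pi (fun i => Set.univ.pi (fun k => B ⟨i, k⟩)) := by
      ext y
      simp only [Set.mem_preimage, Set.mem_univ_pi]
      constructor
      · intro h i k
        exact h ⟨i, k⟩
      · intro h p
        exact h p.1 p.2
    rw [hpre, volume_pi_pi]
    rw [Finset.prod_congr rfl (fun i _ => volume_pi_pi (fun k => B ⟨i, k⟩))]
    rw [← Finset.prod_sigma Finset.univ (fun _ => Finset.univ) (fun p => volume (B p))]
    rw [Finset.univ_sigma_univ]
  exact hsymm.symm (sigEquiv d c).symm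

/-- the canonical map from functions on cells to nested jump-time arrays -/
def toNested : (XSp d c) → (Fin d → Fin c → ℝ) := fun x i k => x (i, k)

lemma mp_toNested : MeasurePreserving (toNested d c) volume volume := by
  have h1 := volume_measurePreserving_piCongrLeft (fun _ : (Σ _ : Fin d, Fin c) => ℝ)
    (Equiv.sigmaEquivProd (Fin d) (Fin c)).symm
  have h2 := mp_sig d c
  have he : toNested d c = (sigEquiv d c)
      ∘ (MeasurableEquiv.piCongrLeft (fun _ : (Σ _ : Fin d, Fin c) => ℝ)
          (Equiv.sigmaEquivProd (Fin d) (Fin c)).symm) := by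
    funext x
    show _ = (sigEquiv d c) _
    funext i k
    show x (i, k) = _
    simp [sigEquiv, Equiv.piCurry, MeasurableEquiv.piCongrLeft, Equiv.piCongrLeft,
      Equiv.piCongrLeft', Sigma.curry, Equiv.sigmaEquivProd]
  rw [he]
  exact h2.comp h1

end Transfer

section Nested
variable (d c : ℕ)

def SSn (t : ℝ) : Set (Fin d → Fin c → ℝ) :=
  {τ | (∀ a b : Cell d c, cle a b → a ≠ b → τ a.1 a.2 < τ b.1 b.2) ∧
    ∀ i k, τ i k ∈ Set.Ioo 0 t}

def Nn : Set (Fin d → Fin c → ℝ) :=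
  {τ | ∃ a b : Cell d c, a ≠ b ∧ τ a.1 a.2 = τ b.1 b.2}

lemma preim_SSn (t : ℝ) : toNested d c ⁻¹' SSn d c t = SSet d c t := by
  ext x
  simp only [SSn, SSet, toNested, cube, Set.mem_preimage, Set.mem_setOf_eq,
    Set.mem_inter_iff, Set.mem_univ_pi]
  constructor
  · rintro ⟨h1, h2⟩
    exact ⟨fun a b hab hne => h1 a b hab hne, fun a => h2 a.1 a.2⟩
  · rintro ⟨h1, h2⟩
    exact ⟨fun a b hab hne => h1 a b hab hne, fun i k => h2 (i, k)⟩

lemma measurable_SSn (t : ℝ) : MeasurableSet (SSn d c t) := by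
  have hev : ∀ a : Cell d c, Measurable (fun τ : Fin d → Fin c → ℝ => τ a.1 a.2) :=
    fun a => (measurable_pi_apply a.2).comp (measurable_pi_apply a.1)
  have h1 : MeasurableSet {τ : Fin d → Fin c → ℝ |
      ∀ a b : Cell d c, cle a b → a ≠ b → τ a.1 a.2 < τ b.1 b.2} := by
    have h : {τ : Fin d → Fin c → ℝ |
        ∀ a b : Cell d c, cle a b → a ≠ b → τ a.1 a.2 < τ b.1 b.2}
        = ⋂ a, ⋂ b, ⋂ (_ : cle a b), ⋂ (_ : a ≠ b),
            {τ : Fin d → Fin c → ℝ | τ a.1 a.2 < τ b.1 b.2} := by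
      ext τ; simp [Set.mem_iInter]
    rw [h]
    exact MeasurableSet.iInter fun a => MeasurableSet.iInter fun b =>
      MeasurableSet.iInter fun _ => MeasurableSet.iInter fun _ =>
        measurableSet_lt (hev a) (hev b)
  have h2 : MeasurableSet {τ : Fin d → Fin c → ℝ | ∀ i k, τ i k ∈ Set.Ioo (0:ℝ) t} := by
    have h : {τ : Fin d → Fin c → ℝ | ∀ i k, τ i k ∈ Set.Ioo (0:ℝ) t}
        = ⋂ i, ⋂ k, (fun τ : Fin d → Fin c → ℝ => τ i k) ⁻¹' Set.Ioo (0:ℝ) t := by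
      ext τ; simp [Set.mem_iInter]
    rw [h]
    exact MeasurableSet.iInter fun i => MeasurableSet.iInter fun k =>
      (hev (i, k)) measurableSet_Ioo
  exact MeasurableSet.inter h1 h2

lemma measurable_Nn : MeasurableSet (Nn d c) := by
  have hev : ∀ a : Cell d c, Measurable (fun τ : Fin d → Fin c → ℝ => τ a.1 a.2) :=
    fun a => (measurable_pi_apply a.2).comp (measurable_pi_apply a.1)
  have h : Nn d c = ⋃ a : Cell d c, ⋃ b : Cell d c, ⋃ (_ : a ≠ b),
      {τ : Fin d → Fin c → ℝ | τ a.1 a.2 = τ b.1 b.2} := by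
    ext τ; simp [Nn, Set.mem_iUnion]
  rw [h]
  exact MeasurableSet.iUnion fun a => MeasurableSet.iUnion fun b =>
    MeasurableSet.iUnion fun _ => measurableSet_eq_fun (hev a) (hev b)

lemma null_Nn : volume (Nn d c) = 0 := by
  have h := (mp_toNested d c).measure_preimage (measurable_Nn d c).nullMeasurableSet
  rw [← h]
  refine measure_mono_null ?_ (null_noninj d c)
  intro x hx
  obtain ⟨a, b, hab, he⟩ := hx
  intro hinj
  exact hab (hinj he)

lemma volume_SSn {t : ℝ} (ht : 0 < t) :
    volume (SSn d c t)
      = (G d c (d * c) Finset.univ : ENNReal)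
          * (ENNReal.ofReal t ^ (d * c) / ((d * c).factorial : ENNReal)) := by
  rw [← (mp_toNested d c).measure_preimage (measurable_SSn d c t).nullMeasurableSet,
    preim_SSn, volume_SS d c ht]

end Nested

section Sandwich
variable {d M : ℕ} {t : ℝ}

lemma SSn_subset_NI : SSn d (M - d) t ⊆ nonintersectingJumpTimes d M t := by
  intro τ hτ
  obtain ⟨hstrict, hIoo⟩ := hτ
  have hrow : ∀ i, StrictMono (τ i) := by
    intro i k k' hkk'
    refine hstrict (i, k) (i, k') ⟨le_refl _, hkk'.le⟩ ?_
    simp only [ne_eq, Prod.mk.injEq, not_and]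
    exact fun _ h => absurd (h ▸ hkk') (lt_irrefl _)
  refine ⟨hrow, fun i k => hIoo i k, ?_⟩
  intro i i' hii' s _
  have hcol : ∀ j, τ i' j < τ i j := by
    intro j
    refine hstrict (i', j) (i, j) ⟨hii'.le, le_refl _⟩ ?_
    simp only [ne_eq, Prod.mk.injEq, not_and]
    exact fun h => absurd (h ▸ hii') (lt_irrefl _)
  have hcard : Nat.card {j : Fin (M - d) // τ i j ≤ s}
      ≤ Nat.card {j : Fin (M - d) // τ i' j ≤ s} := by
    refine Nat.card_le_card_of_injective
      (fun j => ⟨j.1, le_of_lt (lt_of_lt_of_le (hcol j.1) j.2)⟩) ?_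
    intro a b hab
    exact Subtype.ext (congrArg (fun z : {j : Fin (M - d) // τ i' j ≤ s} => z.1) hab)
  have hii : (i : ℕ) < (i' : ℕ) := hii'
  unfold pathPos
  omega

lemma NI_subset : nonintersectingJumpTimes d M t ⊆ SSn d (M - d) t ∪ Nn d (M - d) := by
  intro τ hτ
  obtain ⟨hrow, hIoo, hpath⟩ := hτ
  by_cases hinj : Function.Injective (fun a : Cell d (M - d) => τ a.1 a.2)
  swap
  · right
    simp only [Function.Injective, not_forall] at hinj
    obtain ⟨a, b, he, hab⟩ := hinj
    exact ⟨a, b, hab, he⟩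
  left
  have hadj : ∀ (i i' : Fin d), (i : ℕ) + 1 = (i' : ℕ) → ∀ k, τ i' k ≤ τ i k := by
    intro i i' hii k
    by_contra hlt
    push_neg at hlt
    set s := τ i k with hs
    have hsIoo : s ∈ Set.Ioo (0:ℝ) t := hIoo i k
    have hA : (k : ℕ) + 1 ≤ Nat.card {j : Fin (M - d) // τ i j ≤ s} := by
      have hle : ∀ j : Fin ((k : ℕ) + 1),
          τ i ⟨(j : ℕ), lt_of_le_of_lt (Nat.lt_succ_iff.1 j.isLt) k.isLt⟩ ≤ s := by
        intro j
        refine (hrow i).monotone ?_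
        rw [Fin.le_def]
        exact Nat.lt_succ_iff.1 j.isLt
      have h1 : ((k : ℕ) + 1) = Nat.card (Fin ((k : ℕ) + 1)) := by
        rw [Nat.card_eq_fintype_card, Fintype.card_fin]
      rw [h1]
      refine Nat.card_le_card_of_injective
        (fun j => ⟨⟨(j : ℕ), lt_of_le_of_lt (Nat.lt_succ_iff.1 j.isLt) k.isLt⟩, hle j⟩) ?_
      intro a b hab
      have := congrArg (fun z => (z : {j : Fin (M - d) // τ i j ≤ s}).1.1) hab
      exact Fin.ext this
    have hB : Nat.card {j : Fin (M - d) // τ i' j ≤ s} ≤ (k : ℕ) := by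
      have h1 : ((k : ℕ)) = Nat.card (Fin (k : ℕ)) := by
        rw [Nat.card_eq_fintype_card, Fintype.card_fin]
      rw [h1]
      refine Nat.card_le_card_of_injective (fun j => ⟨(j.1 : ℕ), ?_⟩) ?_
      · by_contra hge
        push_neg at hge
        have h2 : τ i' k ≤ τ i' j.1 := (hrow i').monotone (by rw [Fin.le_def]; exact hge)
        have h3 : τ i' j.1 ≤ s := j.2
        linarith
      · intro a b hab
        have := congrArg (fun z => (z : Fin (k : ℕ)).1) hab
        exact Subtype.ext (Fin.ext this)
    have hlt' : i < i' := by rw [Fin.lt_def]; omega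
    have := hpath i i' hlt' s hsIoo
    unfold pathPos at this
    omega
  have hadjs : ∀ (i i' : Fin d), (i : ℕ) + 1 = (i' : ℕ) → ∀ k, τ i' k < τ i k := by
    intro i i' hii k
    refine lt_of_le_of_ne (hadj i i' hii k) ?_
    intro he
    have := hinj (a₁ := (i', k)) (a₂ := (i, k)) he
    have h2 := congrArg (fun z : Cell d (M - d) => (z.1 : ℕ)) this
    simp at h2
    omega
  have hcol : ∀ g : ℕ, ∀ i i' : Fin d, (i : ℕ) = (i' : ℕ) + g + 1 →
      ∀ k, τ i k < τ i' k := by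
    intro g
    induction g with
    | zero =>
      intro i i' he k
      exact hadjs i' i (by omega) k
    | succ g ih =>
      intro i i' he k
      have hmid : ((i' : ℕ) + g + 1) < d := by
        have := i.isLt
        omega
      have h1 : τ i k < τ ⟨(i' : ℕ) + g + 1, hmid⟩ k := hadjs ⟨(i' : ℕ) + g + 1, hmid⟩ i (by simp; omega) k
      have h2 : τ ⟨(i' : ℕ) + g + 1, hmid⟩ k < τ i' k := ih ⟨(i' : ℕ) + g + 1, hmid⟩ i' (by simp) k
      exact h1.trans h2
  refine ⟨fun a b hab hne => ?_, fun i k => hIoo i k⟩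
  obtain ⟨h1, h2⟩ := hab
  rcases eq_or_ne a.1 b.1 with heq | hne1
  · have hsnd : a.2 < b.2 := by
      rcases lt_or_eq_of_le h2 with h | h
      · exact h
      · exact absurd (Prod.ext heq h) hne
    calc τ a.1 a.2 = τ b.1 a.2 := by rw [heq]
      _ < τ b.1 b.2 := hrow b.1 hsnd
  · have hblt : (b.1 : ℕ) < (a.1 : ℕ) := lt_of_le_of_ne h1 (fun h => hne1 (Fin.ext h).symm)
    calc τ a.1 a.2 < τ b.1 a.2 := hcol ((a.1 : ℕ) - (b.1 : ℕ) - 1) a.1 b.1 (by omega) a.2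
      _ ≤ τ b.1 b.2 := (hrow b.1).monotone h2

lemma volume_NI_eq (d M : ℕ) (t : ℝ) :
    volume (nonintersectingJumpTimes d M t) = volume (SSn d (M - d) t) := by
  refine le_antisymm ?_ (measure_mono SSn_subset_NI)
  calc volume (nonintersectingJumpTimes d M t)
      ≤ volume (SSn d (M - d) t ∪ Nn d (M - d)) := measure_mono NI_subset
    _ ≤ volume (SSn d (M - d) t) + volume (Nn d (M - d)) := measure_union_le _ _
    _ = volume (SSn d (M - d) t) := by rw [null_Nn, add_zero]

end Sandwich

end NDP

/-- The Lebesgue measure of the set of jump-time vectors for `d` non-intersecting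
up/right paths from `(0,i)` to `(t, M−d+i)`, `1 ≤ i ≤ d`, equals
`t^{(M−d)d} · ∏_{i=0}^{d−1} i! / (M−d+i)!`. -/
theorem volume_nonintersectingJumpTimes (d M : ℕ) (hd : 0 < d) (hdM : d ≤ M)
    (t : ℝ) (ht : 0 < t) :
    volume (nonintersectingJumpTimes d M t)
      = ENNReal.ofReal (t ^ ((M - d) * d) *
          ∏ i ∈ Finset.range d, (Nat.factorial i : ℝ) / (Nat.factorial (M - d + i))) := by
  set c := M - d with hc
  rw [NDP.volume_NI_eq d M t, NDP.volume_SSn d c ht]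
  have hN : NDP.G d c (d * c) Finset.univ * ∏ i : Fin d, (c + (i : ℕ)).factorial
      = (d * c).factorial * ∏ i : Fin d, ((i : ℕ)).factorial := by
    exact_mod_cast NDP.rect_count (d := d) (c := c)
  have hNR : (NDP.G d c (d * c) Finset.univ : ℝ)
        * ∏ i ∈ Finset.range d, ((c + i).factorial : ℝ)
      = ((d * c).factorial : ℝ) * ∏ i ∈ Finset.range d, ((i).factorial : ℝ) := by
    have h := congrArg (fun k : ℕ => (k : ℝ)) hN
    push_cast at h
    rw [Fin.prod_univ_eq_prod_range (fun i => (((c + i).factorial : ℕ) : ℝ)) d,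
      Fin.prod_univ_eq_prod_range (fun i => (((i).factorial : ℕ) : ℝ)) d] at h
    exact h
  have hfacpos : (0:ℝ) < ((d * c).factorial : ℝ) := by exact_mod_cast Nat.factorial_pos _
  have hreal : (NDP.G d c (d * c) Finset.univ : ℝ) * (t ^ (d * c) / ((d * c).factorial : ℝ))
      = t ^ (c * d) * ∏ i ∈ Finset.range d,
          ((i).factorial : ℝ) / (((c + i)).factorial : ℝ) := by
    rw [Finset.prod_div_distrib, mul_comm c d]
    have hden : (∏ i ∈ Finset.range d, (((c + i)).factorial : ℝ)) ≠ 0 := by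
      refine Finset.prod_ne_zero_iff.2 (fun i _ => ?_)
      exact_mod_cast Nat.factorial_ne_zero _
    field_simp
    linear_combination hNR
  have hG : (NDP.G d c (d * c) Finset.univ : ENNReal)
      = ENNReal.ofReal ((NDP.G d c (d * c) Finset.univ : ℝ)) :=
    (ENNReal.ofReal_natCast _).symm
  have hFac : (((d * c).factorial : ℕ) : ENNReal)
      = ENNReal.ofReal (((d * c).factorial : ℝ)) := (ENNReal.ofReal_natCast _).symm
  rw [hG, hFac, ← ENNReal.ofReal_pow ht.le, ← ENNReal.ofReal_div_of_pos hfacpos,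
    ← ENNReal.ofReal_mul (by positivity)]
  rw [show (M - d) * d = c * d from rfl]
  exact congrArg ENNReal.ofReal hreal
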